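/- Let μ be a probability mass function on a finite set X, O ⊆ X nonempty with p := ∑_{x∈O} μ(x) ∈ (0,1], μ_O the conditional distribution on O, ρ_O the uniform distribution on O, and ν := p·μ_O + (1−p)·ρ_O. Then for every probability mass function σ supported in O, D(μ‖σ) ≥ D(μ‖ν) where D is the quadratic Bregman divergence, with equality if and only if σ = ν. -/

import Mathlib

open Finset

noncomputable def Breg {X : Type*} [Fintype X] (a b : X → ℝ) : ℝ :=
  (1/2) * ∑ x, (a x - b x)^2

theorem bregman_single_min {X : Type*} [Fintype X] [DecidableEq X]
    (μ σ : X → ℝ) (O : Finset X) (hOne : O.Nonempty)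
    (hμ0 : ∀ x, 0 ≤ μ x) (hμ1 : ∑ x, μ x = 1)
    (p : ℝ) (hp : p = ∑ x ∈ O, μ x) (hppos : 0 < p) (hple : p ≤ 1)
    (μO ρO ν : X → ℝ)
    (hμO : ∀ x, μO x = if x ∈ O then μ x / p else 0)
    (hρO : ∀ x, ρO x = if x ∈ O then 1 / (O.card : ℝ) else 0)
    (hν : ∀ x, ν x = p * μO x + (1 - p) * ρO x)
    (hσ0 : ∀ x, 0 ≤ σ x) (hσ1 : ∑ x, σ x = 1)
    (hσsupp : ∀ x ∉ O, σ x = 0) :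
    Breg μ σ ≥ Breg μ ν ∧ (Breg μ σ = Breg μ ν ↔ σ = ν) := by
  have hcard : (0:ℝ) < O.card := by exact_mod_cast card_pos.mpr hOne
  have hcard' : (O.card : ℝ) ≠ 0 := ne_of_gt hcard
  have hp0 : p ≠ 0 := ne_of_gt hppos
  set c : ℝ := (1-p)/O.card with hc
  have hνO : ∀ x ∈ O, ν x = μ x + c := by
    intro x hx
    rw [hν, hμO, hρO]
    simp only [hx, if_true, hc]
    field_simp
  have hνout : ∀ x ∉ O, ν x = 0 := by
    intro x hx; rw [hν, hμO, hρO]; simp [hx]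
  have hσO : ∑ x ∈ O, σ x = 1 := by
    rw [← hσ1]
    exact Finset.sum_subset (subset_univ O) (fun x _ hx => hσsupp x hx)
  have hνsum : ∑ x ∈ O, ν x = 1 := by
    rw [Finset.sum_congr rfl hνO, Finset.sum_add_distrib, Finset.sum_const, ← hp,
      nsmul_eq_mul, hc]
    field_simp
    ring
  have hcross : ∑ x, (μ x - ν x) * (ν x - σ x) = 0 := by
    rw [← Finset.sum_subset (subset_univ O)
      (fun x _ hx => by rw [hνout x hx, hσsupp x hx]; ring)]
    have h1 : ∑ x ∈ O, (μ x - ν x) * (ν x - σ x) = ∑ x ∈ O, (-c) * (ν x - σ x) :=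
      Finset.sum_congr rfl fun x hx => by rw [hνO x hx]; ring
    rw [h1, ← Finset.mul_sum, Finset.sum_sub_distrib, hνsum, hσO]; ring
  have key : Breg μ σ = Breg μ ν + (1/2) * ∑ x, (σ x - ν x)^2 := by
    unfold Breg
    have h2 : ∀ x ∈ (univ : Finset X), (μ x - σ x)^2 =
        (μ x - ν x)^2 + (σ x - ν x)^2 + 2*((μ x - ν x)*(ν x - σ x)) :=
      fun x _ => by ring
    rw [Finset.sum_congr rfl h2, Finset.sum_add_distrib, Finset.sum_add_distrib,
      ← Finset.mul_sum, hcross]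
    ring
  have hsq : 0 ≤ ∑ x, (σ x - ν x)^2 := Finset.sum_nonneg fun x _ => sq_nonneg _
  refine ⟨by rw [key]; linarith, ?_, fun h => by rw [h]⟩
  intro h
  have hz : ∑ x, (σ x - ν x)^2 = 0 := by rw [key] at h; linarith
  funext x
  have h3 := (Finset.sum_eq_zero_iff_of_nonneg
    (fun x _ => sq_nonneg (σ x - ν x))).mp hz x (mem_univ x)
  have h4 := pow_eq_zero_iff (n := 2) (by norm_num) |>.mp h3
  linarith
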